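/- With g = R ⋉ n and the embedding i : C(n,n)^R → C(g,g) as above, a cochain f ∈ C(n,n)^R is a cocycle for the Chevalley–Eilenberg differential of n if and only if i(f) is a cocycle for g. Consequently Z(g,g) ∩ i(C(n,n)^R) = i(Z(n,n)^R). -/

import Mathlib

/-! Statement 6: for `g = R ⋉ n`, an `R`-invariant cochain `f` on `n` is a cocycle iff `i(f)`
is a cocycle; consequently `Z(g,g) ∩ i(C(n,n)^R) = i(Z(n,n)^R)`. -/

open scoped BigOperators

section Defs

/-- Pair term of the Chevalley–Eilenberg differential (raw version). -/
def pairArgR {L : Type*} [LieRing L] :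
    ∀ {k : ℕ}, ((Fin k → L) → L) → (Fin (k + 1) → L) → Fin (k + 1) → Fin (k + 1) → L
  | 0, _, _, _, _ => 0
  | (k + 1), f, x, i, j =>
    if h : (i : ℕ) < (j : ℕ) then
      f (Fin.cons ⁅x i, x j⁆
        (fun l => x (j.succAbove
          ((⟨(i : ℕ), by have := j.isLt; omega⟩ : Fin (k + 1)).succAbove l))))
    else 0

/-- The Chevalley–Eilenberg differential with adjoint coefficients (raw version). -/
def ceD {L : Type*} [LieRing L] {k : ℕ} (f : (Fin k → L) → L) : (Fin (k + 1) → L) → L :=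
  fun x =>
    (∑ i : Fin (k + 1), ((-1 : ℤ) ^ (i : ℕ)) • ⁅x i, f (x ∘ i.succAbove)⁆)
      + ∑ j : Fin (k + 1), ∑ i ∈ Finset.Iio j,
          ((-1 : ℤ) ^ ((i : ℕ) + (j : ℕ))) • pairArgR f x i j

/-- Extension by zero `i(F)` of a cochain on `n` to a cochain on `g`, via the projection
`π : g → n` along `R`. -/
def iFunR {𝕂 g : Type*} [Field 𝕂] [LieRing g] [LieAlgebra 𝕂 g]
    (n : LieSubalgebra 𝕂 g) (π : g →ₗ[𝕂] n) {k : ℕ}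
    (F : (Fin k → n) → n) : (Fin k → g) → g := fun x => (F (fun j => π (x j)) : g)

/-- `R`-invariance of a cochain on `n`. -/
def RInvt {𝕂 g : Type*} [Field 𝕂] [LieRing g] [LieAlgebra 𝕂 g]
    (R n : LieSubalgebra 𝕂 g) (hid : ∀ x : g, ∀ y ∈ n, ⁅x, y⁆ ∈ n) {k : ℕ}
    (f : AlternatingMap 𝕂 n n (Fin k)) : Prop :=
  ∀ r ∈ R, ∀ x : Fin k → n,
    ⁅r, (f x : g)⁆ =
      ∑ i : Fin k, (f (Function.update x i ⟨⁅r, (x i : g)⁆, hid r (x i) (x i).2⟩) : g)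

end Defs


namespace St6

lemma succAbove_val' {m : ℕ} (p : Fin (m+1)) (i : Fin m) :
    (p.succAbove i : ℕ) = if (i:ℕ) < (p:ℕ) then (i:ℕ) else (i:ℕ)+1 := by
  rcases lt_or_ge (Fin.castSucc i) p with h | h
  · rw [Fin.succAbove_of_castSucc_lt _ _ h]
    have : (i:ℕ) < (p:ℕ) := h
    simp [this]
  · rw [Fin.succAbove_of_le_castSucc _ _ h]
    have : ¬ (i:ℕ) < (p:ℕ) := by
      have : (p:ℕ) ≤ (i:ℕ) := h
      omega
    simp [this]

lemma succAbove_mk_of_lt {m : ℕ} (i j : Fin (m+2)) (h : (i:ℕ) < (j:ℕ)) (h2 : (i:ℕ) < m+1) :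
    j.succAbove ⟨(i:ℕ), h2⟩ = i := by
  apply Fin.ext; rw [succAbove_val']; simp [h]

lemma pairArgR_succ {L : Type*} [LieRing L] {m : ℕ} (f : (Fin (m+1) → L) → L)
    (x : Fin (m+2) → L) (i j : Fin (m+2)) (h : (i : ℕ) < (j : ℕ)) :
    pairArgR f x i j = f (Fin.cons ⁅x i, x j⁆
      (fun l => x (j.succAbove
        ((⟨(i : ℕ), by have := j.isLt; omega⟩ : Fin (m + 1)).succAbove l)))) := by
  rw [pairArgR, dif_pos h]

lemma pair_index_ne_left {m : ℕ} (i j : Fin (m+2)) (hij : (i:ℕ) < (j:ℕ)) (l : Fin m) :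
    j.succAbove ((⟨(i:ℕ), by have := j.isLt; omega⟩ : Fin (m+1)).succAbove l) ≠ i := by
  intro hEq
  have h2 : j.succAbove (⟨(i:ℕ), by have := j.isLt; omega⟩ : Fin (m+1)) = i :=
    succAbove_mk_of_lt i j hij (by have := j.isLt; omega)
  have h3 := Fin.succAbove_right_injective (p := j) (hEq.trans h2.symm)
  exact Fin.succAbove_ne _ _ h3

lemma pair_exists_preimage {m : ℕ} (i j p : Fin (m+2)) (hij : (i:ℕ) < (j:ℕ))
    (hpi : p ≠ i) (hpj : p ≠ j) :
    ∃ t₀ : Fin m, j.succAbove ((⟨(i:ℕ), by have := j.isLt; omega⟩ : Fin (m+1)).succAbove t₀) = p := by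
  obtain ⟨q, hq⟩ := Fin.exists_succAbove_eq hpj
  have hq2 : q ≠ (⟨(i:ℕ), by have := j.isLt; omega⟩ : Fin (m+1)) := by
    intro h
    exact hpi (by rw [← hq, h]; exact succAbove_mk_of_lt i j hij (by have := j.isLt; omega))
  obtain ⟨t₀, ht₀⟩ := Fin.exists_succAbove_eq hq2
  exact ⟨t₀, by rw [ht₀, hq]⟩

lemma update_comp_inj {α : Type*} {s r : ℕ} (x : Fin r → α) (e : Fin s → Fin r)
    (he : Function.Injective e) (p : Fin r) (c : α) (t₀ : Fin s) (ht : e t₀ = p) :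
    (fun l => Function.update x p c (e l)) = Function.update (fun l => x (e l)) t₀ c := by
  funext l
  rw [Function.update_apply, Function.update_apply]
  by_cases h : l = t₀
  · subst h; simp [ht]
  · rw [if_neg h, if_neg (fun hh : e l = p => h (he (hh.trans ht.symm)))]

lemma update_comp_ne {α : Type*} {s r : ℕ} (x : Fin r → α) (e : Fin s → Fin r)
    (p : Fin r) (c : α) (hne : ∀ l, e l ≠ p) :
    (fun l => Function.update x p c (e l)) = fun l => x (e l) := by
  funext l; exact Function.update_of_ne (hne l) c x

lemma cons_val' {α : Type*} {m : ℕ} (cc : α) (w : Fin m → α) (s : Fin (m+1))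
    (h0 : (s:ℕ) ≠ 0) (h1 : (s:ℕ) - 1 < m) :
    (Fin.cons cc w : Fin (m+1) → α) s = w ⟨(s:ℕ)-1, h1⟩ := by
  induction s using Fin.cases with
  | zero => simp at h0
  | succ t =>
    rw [Fin.cons_succ]
    exact congrArg w (Fin.ext (by simp))

end St6

namespace St6

section CeD
variable {L : Type*} [LieRing L]

lemma apply_cons_add {m : ℕ} (F : (Fin (m+1) → L) → L)
    (hF : ∀ (w : Fin (m+1) → L) l a b,
      F (Function.update w l (a+b)) = F (Function.update w l a) + F (Function.update w l b))
    (a b : L) (tl : Fin m → L) :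
    F (Fin.cons (a+b) tl) = F (Fin.cons a tl) + F (Fin.cons b tl) := by
  have heq : ∀ z : L, F (Fin.cons z tl) = F (Function.update (Fin.cons a tl) 0 z) := fun z => by
    rw [Fin.update_cons_zero]
  rw [heq (a+b), heq a, heq b]
  exact hF _ _ _ _

lemma ceD_update_add {k : ℕ} (F : (Fin k → L) → L)
    (hF : ∀ (w : Fin k → L) l a b,
      F (Function.update w l (a+b)) = F (Function.update w l a) + F (Function.update w l b))
    (x : Fin (k+1) → L) (p : Fin (k+1)) (a b : L) :
    ceD F (Function.update x p (a+b))
      = ceD F (Function.update x p a) + ceD F (Function.update x p b) := by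
  have hA : (∑ i : Fin (k+1), ((-1:ℤ)^(i:ℕ)) •
        ⁅Function.update x p (a+b) i, F (Function.update x p (a+b) ∘ i.succAbove)⁆)
      = (∑ i : Fin (k+1), ((-1:ℤ)^(i:ℕ)) •
          ⁅Function.update x p a i, F (Function.update x p a ∘ i.succAbove)⁆)
        + (∑ i : Fin (k+1), ((-1:ℤ)^(i:ℕ)) •
          ⁅Function.update x p b i, F (Function.update x p b ∘ i.succAbove)⁆) := by
    rw [← Finset.sum_add_distrib]
    refine Finset.sum_congr rfl fun i _ => ?_
    by_cases hip : i = p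
    · subst hip
      have hc : ∀ c : L, Function.update x i c ∘ i.succAbove = x ∘ i.succAbove := fun c =>
        funext fun l => by
          simp only [Function.comp_apply]
          exact Function.update_of_ne (Fin.succAbove_ne i l) c x
      simp only [hc, Function.update_self, add_lie, smul_add]
    · have hpi : p ≠ i := Ne.symm hip
      obtain ⟨l₀, hl₀⟩ := Fin.exists_succAbove_eq hpi
      have hc : ∀ c : L, Function.update x p c ∘ i.succAbove
          = Function.update (x ∘ i.succAbove) l₀ c := fun c => by
        funext l
        simp only [Function.comp_apply]
        have h := congrFun (update_comp_inj x i.succAbove Fin.succAbove_right_injective p c l₀ hl₀) l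
        exact h
      have hxi : ∀ c : L, Function.update x p c i = x i := fun c =>
        Function.update_of_ne hip c x
      simp only [hc, hxi]
      rw [hF (x ∘ i.succAbove) l₀ a b, lie_add, smul_add]
  have hB : (∑ j : Fin (k+1), ∑ i ∈ Finset.Iio j,
        ((-1:ℤ)^((i:ℕ)+(j:ℕ))) • pairArgR F (Function.update x p (a+b)) i j)
      = (∑ j : Fin (k+1), ∑ i ∈ Finset.Iio j,
          ((-1:ℤ)^((i:ℕ)+(j:ℕ))) • pairArgR F (Function.update x p a) i j)
        + (∑ j : Fin (k+1), ∑ i ∈ Finset.Iio j,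
          ((-1:ℤ)^((i:ℕ)+(j:ℕ))) • pairArgR F (Function.update x p b) i j) := by
    cases k with
    | zero =>
      have : ∀ j : Fin 1, Finset.Iio j = ∅ := by decide
      simp [this]
    | succ m =>
      rw [← Finset.sum_add_distrib]
      refine Finset.sum_congr rfl fun j _ => ?_
      rw [← Finset.sum_add_distrib]
      refine Finset.sum_congr rfl fun i hi => ?_
      rw [Finset.mem_Iio] at hi
      have hij : (i:ℕ) < (j:ℕ) := hi
      rw [pairArgR_succ F (Function.update x p (a+b)) i j hij,
        pairArgR_succ F (Function.update x p a) i j hij,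
        pairArgR_succ F (Function.update x p b) i j hij, ← smul_add]
      refine congrArg (fun t => ((-1:ℤ)^((i:ℕ)+(j:ℕ))) • t) ?_
      have hiilt : (i:ℕ) < m+1 := by have := j.isLt; omega
      set ii : Fin (m+1) := ⟨(i:ℕ), hiilt⟩ with hiidef
      have hjne : j ≠ i := by intro h; rw [h] at hij; omega
      by_cases hpi : p = i
      · subst hpi
        have htl : ∀ c : L, (fun l => Function.update x p c (j.succAbove (ii.succAbove l)))
            = fun l => x (j.succAbove (ii.succAbove l)) :=
          fun c => update_comp_ne x _ p c (fun l => pair_index_ne_left p j hij l)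
        have hxj : ∀ c : L, Function.update x p c j = x j := fun c =>
          Function.update_of_ne hjne c x
        simp only [Function.update_self, hxj]
        rw [show (fun l => Function.update x p (a+b) (j.succAbove (ii.succAbove l))) = _ from htl _,
          show (fun l => Function.update x p a (j.succAbove (ii.succAbove l))) = _ from htl _,
          show (fun l => Function.update x p b (j.succAbove (ii.succAbove l))) = _ from htl _]
        rw [add_lie]
        exact apply_cons_add F hF _ _ _
      · by_cases hpj : p = j
        · subst hpj
          have htl : ∀ c : L, (fun l => Function.update x p c (p.succAbove (ii.succAbove l)))
              = fun l => x (p.succAbove (ii.succAbove l)) :=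
            fun c => update_comp_ne x _ p c (fun l => Fin.succAbove_ne _ _)
          have hxi : ∀ c : L, Function.update x p c i = x i := fun c =>
            Function.update_of_ne (Ne.symm hjne) c x
          simp only [Function.update_self, hxi]
          rw [show (fun l => Function.update x p (a+b) (p.succAbove (ii.succAbove l))) = _ from htl _,
            show (fun l => Function.update x p a (p.succAbove (ii.succAbove l))) = _ from htl _,
            show (fun l => Function.update x p b (p.succAbove (ii.succAbove l))) = _ from htl _]
          rw [lie_add]
          exact apply_cons_add F hF _ _ _
        · obtain ⟨t₀, ht₀⟩ := pair_exists_preimage i j p hij hpi hpj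
          have hinj : Function.Injective (fun l : Fin m => j.succAbove (ii.succAbove l)) :=
            fun l1 l2 h => Fin.succAbove_right_injective (Fin.succAbove_right_injective h)
          have htl : ∀ c : L, (fun l => Function.update x p c (j.succAbove (ii.succAbove l)))
              = Function.update (fun l => x (j.succAbove (ii.succAbove l))) t₀ c := fun c =>
            update_comp_inj x _ hinj p c t₀ ht₀
          have hxi : ∀ c : L, Function.update x p c i = x i := fun c =>
            Function.update_of_ne (Ne.symm hpi) c x
          have hxj : ∀ c : L, Function.update x p c j = x j := fun c =>
            Function.update_of_ne (Ne.symm hpj) c x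
          simp only [hxi, hxj]
          rw [show (fun l => Function.update x p (a+b) (j.succAbove (ii.succAbove l))) = _ from htl _,
            show (fun l => Function.update x p a (j.succAbove (ii.succAbove l))) = _ from htl _,
            show (fun l => Function.update x p b (j.succAbove (ii.succAbove l))) = _ from htl _]
          rw [Fin.cons_update, Fin.cons_update, Fin.cons_update]
          exact hF _ _ _ _
  simp only [ceD]
  rw [hA, hB]
  exact add_add_add_comm _ _ _ _

end CeD
end St6

namespace St6

section Lie
variable {𝕂 g : Type*} [Field 𝕂] [LieRing g] [LieAlgebra 𝕂 g]
variable (R n : LieSubalgebra 𝕂 g)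

lemma iFunR_hF (π : g →ₗ[𝕂] n) {k : ℕ} (f : AlternatingMap 𝕂 n n (Fin k)) :
    ∀ (w : Fin k → g) (l : Fin k) (a b : g),
      iFunR n π ⇑f (Function.update w l (a+b))
        = iFunR n π ⇑f (Function.update w l a) + iFunR n π ⇑f (Function.update w l b) := by
  intro w l a b
  have h : ∀ c : g, (fun j => π (Function.update w l c j))
      = Function.update (fun j => π (w j)) l (π c) := by
    intro c; funext j
    rw [Function.update_apply, Function.update_apply]
    split
    · next hh => subst hh; rfl
    · rfl
  show ((f fun j => π (Function.update w l (a+b) j) : n) : g)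
      = ((f fun j => π (Function.update w l a j) : n) : g)
        + ((f fun j => π (Function.update w l b j) : n) : g)
  rw [h, h, h, map_add π, AlternatingMap.map_update_add]
  push_cast
  rfl

lemma iFunR_zero_coord (π : g →ₗ[𝕂] n) {k : ℕ} (f : AlternatingMap 𝕂 n n (Fin k))
    (w : Fin k → g) (l₀ : Fin k) (h : π (w l₀) = 0) :
    iFunR n π ⇑f w = 0 := by
  show ((f fun j => π (w j) : n) : g) = 0
  rw [f.map_coord_zero l₀ h]
  simp

lemma ceD_iFunR_coe (π : g →ₗ[𝕂] n) (hπn : ∀ y : n, π (y : g) = y) {k : ℕ}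
    (f : AlternatingMap 𝕂 n n (Fin k)) (y : Fin (k+1) → n) :
    ceD (iFunR n π ⇑f) (fun i => (y i : g)) = ((ceD (⇑f) y : n) : g) := by
  simp only [ceD]
  have hsub : ∀ v : n, (v : g) = n.toSubmodule.subtype v := fun _ => rfl
  rw [hsub, map_add, map_sum, map_sum]
  congr 1
  · refine Finset.sum_congr rfl fun i _ => ?_
    rw [map_zsmul]
    refine congrArg (fun t => ((-1:ℤ)^(i:ℕ)) • t) ?_
    have harg : (fun l => π ((fun i => (y i : g)) ∘ i.succAbove <| l)) = y ∘ i.succAbove := by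
      funext l
      simp only [Function.comp_apply]
      exact hπn _
    show ⁅(y i : g), ((f fun l => π (((fun i => (y i : g)) ∘ i.succAbove) l) : n) : g)⁆ = _
    rw [harg]
    rfl
  · refine Finset.sum_congr rfl fun j _ => ?_
    rw [map_sum]
    refine Finset.sum_congr rfl fun i hi => ?_
    rw [Finset.mem_Iio] at hi
    have hij : (i:ℕ) < (j:ℕ) := hi
    rw [map_zsmul]
    refine congrArg (fun t => ((-1:ℤ)^((i:ℕ)+(j:ℕ))) • t) ?_
    cases k with
    | zero => omega
    | succ m =>
      rw [pairArgR_succ (iFunR n π ⇑f) _ i j hij, pairArgR_succ (⇑f) y i j hij]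
      show ((f fun s => π ((Fin.cons ⁅(y i : g), (y j : g)⁆
          (fun l => (y (j.succAbove ((⟨(i:ℕ), _⟩ : Fin (m+1)).succAbove l)) : g))
            : Fin (m+1) → g) s) : n) : g) = _
      refine congrArg _ (congrArg _ ?_)
      funext s
      induction s using Fin.cases with
      | zero =>
        rw [Fin.cons_zero, Fin.cons_zero, ← LieSubalgebra.coe_bracket, hπn]
      | succ t =>
        rw [Fin.cons_succ, Fin.cons_succ, hπn]

end Lie
end St6

namespace St6
section Lie2
variable {𝕂 g : Type*} [Field 𝕂] [LieRing g] [LieAlgebra 𝕂 g]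
variable (R n : LieSubalgebra 𝕂 g)

lemma ceD_iFunR_twoR (π : g →ₗ[𝕂] n) (hπR : ∀ r ∈ R, π r = 0) {k : ℕ}
    (f : AlternatingMap 𝕂 n n (Fin k)) (x : Fin (k+1) → g)
    (a b : Fin (k+1)) (hab : a ≠ b) (ha : x a ∈ R) (hb : x b ∈ R) :
    ceD (iFunR n π ⇑f) x = 0 := by
  simp only [ceD]
  rw [Finset.sum_eq_zero, Finset.sum_eq_zero, add_zero]
  · -- pair terms
    intro j _
    rw [Finset.sum_eq_zero]
    intro i hi
    rw [Finset.mem_Iio] at hi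
    have hij : (i:ℕ) < (j:ℕ) := hi
    cases k with
    | zero => omega
    | succ m =>
      rw [pairArgR_succ (iFunR n π ⇑f) x i j hij]
      have hvanish : ∀ p : Fin (m+2), x p ∈ R → p ≠ i → p ≠ j →
          iFunR n π ⇑f (Fin.cons ⁅x i, x j⁆
            (fun l => x (j.succAbove
              ((⟨(i:ℕ), by have := j.isLt; omega⟩ : Fin (m+1)).succAbove l)))) = 0 := by
        intro p hp hpi hpj
        obtain ⟨t₀, ht₀⟩ := pair_exists_preimage i j p hij hpi hpj
        refine iFunR_zero_coord n π f _ t₀.succ ?_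
        rw [Fin.cons_succ, ht₀]
        exact hπR _ hp
      by_cases h1 : a = i ∨ a = j
      · by_cases h2 : b = i ∨ b = j
        · -- {i,j} = {a,b}: bracket lands in R
          have hxij : x i ∈ R ∧ x j ∈ R := by
            rcases h1 with h1 | h1 <;> rcases h2 with h2 | h2 <;>
              first
                | (exact absurd (h1.trans h2.symm) hab)
                | (constructor <;> [skip; skip] <;> simp_all)
          refine smul_eq_zero_of_right _ ?_
          refine iFunR_zero_coord n π f _ 0 ?_
          rw [Fin.cons_zero]
          exact hπR _ (R.lie_mem hxij.1 hxij.2)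
        · push_neg at h2
          exact smul_eq_zero_of_right _ (hvanish b hb h2.1 h2.2)
      · push_neg at h1
        exact smul_eq_zero_of_right _ (hvanish a ha h1.1 h1.2)
  · -- single terms
    intro i _
    have : a ≠ i ∨ b ≠ i := by
      by_contra hcon
      push_neg at hcon
      exact hab (hcon.1.trans hcon.2.symm)
    obtain ⟨p, hp, hpne⟩ : ∃ p, x p ∈ R ∧ p ≠ i := by
      rcases this with h | h
      · exact ⟨a, ha, h⟩
      · exact ⟨b, hb, h⟩
    obtain ⟨l₀, hl₀⟩ := Fin.exists_succAbove_eq hpne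
    have h0 : iFunR n π ⇑f (x ∘ i.succAbove) = 0 := by
      refine iFunR_zero_coord n π f _ l₀ ?_
      show π (x (i.succAbove l₀)) = 0
      rw [hl₀]
      exact hπR _ hp
    rw [h0, lie_zero, smul_zero]

end Lie2
end St6

namespace St6

lemma cycleRange_val {m : ℕ} (l j : Fin (m+1)) :
    ((l.cycleRange j : Fin (m+1)) : ℕ)
      = if (j:ℕ) < (l:ℕ) then (j:ℕ)+1 else if (j:ℕ) = (l:ℕ) then 0 else (j:ℕ) := by
  rcases lt_trichotomy j l with h | h | h
  · rw [Fin.cycleRange_of_lt h]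
    have hl : j < Fin.last m := lt_of_lt_of_le h (Fin.le_last l)
    have hv : ((j+1 : Fin (m+1)) : ℕ) = (j:ℕ)+1 := Fin.val_add_one_of_lt hl
    have hlt : (j:ℕ) < (l:ℕ) := h
    rw [hv, if_pos hlt]
  · subst h
    rw [Fin.cycleRange_self]
    simp
  · rw [Fin.cycleRange_of_gt h]
    have hgt : (l:ℕ) < (j:ℕ) := h
    have h1 : ¬ (j:ℕ) < (l:ℕ) := by omega
    have h2 : ¬ (j:ℕ) = (l:ℕ) := by omega
    simp [h1, h2]

lemma update_eq_cons_comp_cycleRange {α : Type*} {m : ℕ} (y : Fin (m+1) → α)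
    (l : Fin (m+1)) (c : α) :
    Function.update y l c
      = (Fin.cons c (y ∘ l.succAbove) : Fin (m+1) → α) ∘ l.cycleRange := by
  funext s
  simp only [Function.comp_apply]
  rw [Function.update_apply]
  by_cases hs : s = l
  · subst hs
    rw [if_pos rfl]
    have h0 : ((s.cycleRange s : Fin (m+1)) : ℕ) = 0 := by rw [cycleRange_val]; simp
    have : s.cycleRange s = (0 : Fin (m+1)) := by apply Fin.ext; simpa using h0
    rw [this, Fin.cons_zero]
  · rw [if_neg hs]
    have hsl : (s:ℕ) ≠ (l:ℕ) := fun h => hs (Fin.ext h)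
    rcases lt_or_gt_of_ne hsl with h | h
    · have hval : ((l.cycleRange s : Fin (m+1)) : ℕ) = (s:ℕ)+1 := by
        rw [cycleRange_val]; simp [h]
      have hne0 : ((l.cycleRange s : Fin (m+1)) : ℕ) ≠ 0 := by omega
      have hlt : ((l.cycleRange s : Fin (m+1)) : ℕ) - 1 < m := by
        have := l.isLt; omega
      rw [cons_val' c (y ∘ l.succAbove) _ hne0 hlt]
      simp only [Function.comp_apply]
      refine congrArg y (Fin.ext ?_).symm
      have hmk : ((⟨((l.cycleRange s : Fin (m+1)):ℕ) - 1, hlt⟩ : Fin m) : ℕ) = (s:ℕ) := by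
        simp [hval]
      rw [succAbove_val', hmk, if_pos h]
    · have h' : (l:ℕ) < (s:ℕ) := h
      have hval : ((l.cycleRange s : Fin (m+1)) : ℕ) = (s:ℕ) := by
        rw [cycleRange_val, if_neg (by omega), if_neg (by omega)]
      have hne0 : ((l.cycleRange s : Fin (m+1)) : ℕ) ≠ 0 := by omega
      have hlt : ((l.cycleRange s : Fin (m+1)) : ℕ) - 1 < m := by
        have := s.isLt; omega
      rw [cons_val' c (y ∘ l.succAbove) _ hne0 hlt]
      simp only [Function.comp_apply]
      refine congrArg y (Fin.ext ?_).symm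
      have hmk : ((⟨((l.cycleRange s : Fin (m+1)):ℕ) - 1, hlt⟩ : Fin m) : ℕ) = (s:ℕ) - 1 := by
        simp [hval]
      rw [succAbove_val', hmk, if_neg (by omega)]
      omega

section Lie3
variable {𝕂 g : Type*} [Field 𝕂] [LieRing g] [LieAlgebra 𝕂 g]
variable (n : LieSubalgebra 𝕂 g)

lemma coe_update_eq_sign_smul {m : ℕ} (f : AlternatingMap 𝕂 n n (Fin (m+1)))
    (y : Fin (m+1) → n) (l : Fin (m+1)) (c : n) :
    ((f (Function.update y l c) : n) : g)
      = ((-1:ℤ)^(l:ℕ)) • ((f (Fin.cons c (y ∘ l.succAbove)) : n) : g) := by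
  rw [update_eq_cons_comp_cycleRange]
  rw [AlternatingMap.map_perm]
  rw [Fin.sign_cycleRange]
  rw [Units.smul_def]
  push_cast
  simp

end Lie3
end St6

namespace St6
section Lie4
variable {𝕂 g : Type*} [Field 𝕂] [LieRing g] [LieAlgebra 𝕂 g]
variable (R n : LieSubalgebra 𝕂 g)

lemma iFunR_apply (π : g →ₗ[𝕂] n) {k : ℕ} (f : AlternatingMap 𝕂 n n (Fin k))
    (w : Fin k → g) : iFunR n π ⇑f w = ((f (fun j => π (w j)) : n) : g) := rfl

lemma ceD_iFunR_oneR (hid : ∀ x : g, ∀ y ∈ n, ⁅x, y⁆ ∈ n)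
    (π : g →ₗ[𝕂] n) (hπn : ∀ y : n, π (y : g) = y) (hπR : ∀ r ∈ R, π r = 0)
    {k : ℕ} (f : AlternatingMap 𝕂 n n (Fin k)) (hf : RInvt R n hid f)
    (x : Fin (k+1) → g) (a : Fin (k+1)) (ha : x a ∈ R) (hn : ∀ p, p ≠ a → x p ∈ n) :
    ceD (iFunR n π ⇑f) x = 0 := by
  cases k with
  | zero =>
    have ha0 : a = 0 := Fin.fin_one_eq_zero a
    subst ha0
    simp only [ceD]
    have hIio : ∀ j : Fin 1, Finset.Iio j = ∅ := by decide
    have h0 := hf (x 0) ha (fun j => π ((x ∘ Fin.succAbove 0) j))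
    simp only [Finset.univ_eq_empty, Finset.sum_empty] at h0
    simp only [hIio, Finset.sum_empty, Finset.sum_const_zero, add_zero, Fin.sum_univ_succ,
      Fin.val_zero, pow_zero, one_smul, Finset.univ_eq_empty]
    exact h0
  | succ m =>
    have hy : ∀ l : Fin (m+1), x (a.succAbove l) ∈ n := fun l => hn _ (Fin.succAbove_ne a l)
    set y : Fin (m+1) → n := fun l => ⟨x (a.succAbove l), hy l⟩ with hydef
    set c : Fin (m+1) → n := fun l => ⟨⁅x a, (y l : g)⁆, hid (x a) (y l) (y l).2⟩ with hcdef
    have hA : (∑ i : Fin (m+2), ((-1:ℤ)^(i:ℕ)) • ⁅x i, iFunR n π ⇑f (x ∘ i.succAbove)⁆)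
        = ((-1:ℤ)^(a:ℕ)) • ⁅x a, ((f y : n) : g)⁆ := by
      rw [Fintype.sum_eq_single a ?_]
      · refine congrArg _ (congrArg _ ?_)
        rw [iFunR_apply]
        refine congrArg _ (congrArg _ ?_)
        funext l
        show π (x (a.succAbove l)) = y l
        have h2 : x (a.succAbove l) = ((y l : n) : g) := rfl
        rw [h2, hπn]
      · intro i hi
        obtain ⟨l₀, hl₀⟩ := Fin.exists_succAbove_eq (Ne.symm hi)
        have h0 : iFunR n π ⇑f (x ∘ i.succAbove) = 0 := by
          refine iFunR_zero_coord n π f _ l₀ ?_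
          show π (x (i.succAbove l₀)) = 0
          rw [hl₀]; exact hπR _ ha
        rw [h0, lie_zero, smul_zero]
    have hinv : ⁅x a, ((f y : n) : g)⁆
        = ∑ l : Fin (m+1), ((f (Function.update y l (c l)) : n) : g) := hf (x a) ha y
    have hkey : ∀ l : Fin (m+1), ((f (Function.update y l (c l)) : n) : g)
        = ((-1:ℤ)^(l:ℕ)) • ((f (Fin.cons (c l) (y ∘ l.succAbove)) : n) : g) :=
      fun l => coe_update_eq_sign_smul n f y l (c l)
    have hpair0 : ∀ i j : Fin (m+2), (i:ℕ) < (j:ℕ) → i ≠ a → j ≠ a →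
        pairArgR (iFunR n π ⇑f) x i j = 0 := by
      intro i j hij hia hja
      rw [pairArgR_succ (iFunR n π ⇑f) x i j hij]
      obtain ⟨t₀, ht₀⟩ := pair_exists_preimage i j a hij (Ne.symm hia) (Ne.symm hja)
      refine iFunR_zero_coord n π f _ t₀.succ ?_
      rw [Fin.cons_succ, ht₀]
      exact hπR _ ha
    have hBsplit : (∑ j : Fin (m+2), ∑ i ∈ Finset.Iio j,
          ((-1:ℤ)^((i:ℕ)+(j:ℕ))) • pairArgR (iFunR n π ⇑f) x i j)
        = ∑ p : Fin (m+2),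
            ((if a < p then ((-1:ℤ)^((a:ℕ)+(p:ℕ))) • pairArgR (iFunR n π ⇑f) x a p else 0)
              + (if p < a then ((-1:ℤ)^((p:ℕ)+(a:ℕ))) • pairArgR (iFunR n π ⇑f) x p a else 0)) := by
      have hterm : ∀ j : Fin (m+2), ∀ i ∈ Finset.Iio j,
          ((-1:ℤ)^((i:ℕ)+(j:ℕ))) • pairArgR (iFunR n π ⇑f) x i j
            = (if i = a then ((-1:ℤ)^((i:ℕ)+(j:ℕ))) • pairArgR (iFunR n π ⇑f) x i j else 0)
              + (if j = a then ((-1:ℤ)^((i:ℕ)+(j:ℕ))) • pairArgR (iFunR n π ⇑f) x i j else 0) := by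
        intro j i hi
        rw [Finset.mem_Iio] at hi
        have hij : (i:ℕ) < (j:ℕ) := hi
        by_cases h1 : i = a
        · rw [if_pos h1, if_neg (by rintro rfl; exact absurd h1 (Fin.ne_of_lt hi)), add_zero]
        · by_cases h2 : j = a
          · rw [if_neg h1, if_pos h2, zero_add]
          · rw [if_neg h1, if_neg h2, hpair0 i j hij h1 h2, smul_zero, add_zero]
      have hP1 : (∑ j : Fin (m+2), ∑ i ∈ Finset.Iio j,
            if i = a then ((-1:ℤ)^((i:ℕ)+(j:ℕ))) • pairArgR (iFunR n π ⇑f) x i j else 0)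
          = ∑ p : Fin (m+2),
              (if a < p then ((-1:ℤ)^((a:ℕ)+(p:ℕ))) • pairArgR (iFunR n π ⇑f) x a p else 0) := by
        rw [Finset.sum_congr rfl (fun j _ => Finset.sum_ite_eq' (Finset.Iio j) a
          (fun i => ((-1:ℤ)^((i:ℕ)+(j:ℕ))) • pairArgR (iFunR n π ⇑f) x i j))]
        refine Finset.sum_congr rfl fun p _ => ?_
        simp only [Finset.mem_Iio]
      have hP2 : (∑ j : Fin (m+2), ∑ i ∈ Finset.Iio j,
            if j = a then ((-1:ℤ)^((i:ℕ)+(j:ℕ))) • pairArgR (iFunR n π ⇑f) x i j else 0)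
          = ∑ p : Fin (m+2),
              (if p < a then ((-1:ℤ)^((p:ℕ)+(a:ℕ))) • pairArgR (iFunR n π ⇑f) x p a else 0) := by
        have h3 : ∀ j : Fin (m+2), (∑ i ∈ Finset.Iio j,
            if j = a then ((-1:ℤ)^((i:ℕ)+(j:ℕ))) • pairArgR (iFunR n π ⇑f) x i j else 0)
              = if j = a then (∑ i ∈ Finset.Iio a,
                  ((-1:ℤ)^((i:ℕ)+(a:ℕ))) • pairArgR (iFunR n π ⇑f) x i a) else 0 := by
          intro j
          by_cases hja : j = a
          · subst hja; simp
          · simp [hja]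
        rw [Finset.sum_congr rfl (fun j _ => h3 j)]
        rw [Finset.sum_ite_eq' Finset.univ a
          (fun _ => ∑ i ∈ Finset.Iio a, ((-1:ℤ)^((i:ℕ)+(a:ℕ))) • pairArgR (iFunR n π ⇑f) x i a)]
        rw [if_pos (Finset.mem_univ a)]
        rw [show (Finset.Iio a) = Finset.univ ∩ Finset.Iio a from (Finset.univ_inter _).symm]
        rw [← Finset.sum_ite_mem]
        refine Finset.sum_congr rfl fun p _ => ?_
        simp only [Finset.mem_Iio]
      rw [Finset.sum_congr rfl (fun j _ => Finset.sum_congr rfl (hterm j))]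
      rw [Finset.sum_congr rfl (fun j _ => Finset.sum_add_distrib)]
      rw [Finset.sum_add_distrib, hP1, hP2, ← Finset.sum_add_distrib]
    have hG : ∀ l : Fin (m+1),
        ((if a < a.succAbove l
            then ((-1:ℤ)^((a:ℕ)+((a.succAbove l):ℕ))) • pairArgR (iFunR n π ⇑f) x a (a.succAbove l) else 0)
          + (if a.succAbove l < a
            then ((-1:ℤ)^(((a.succAbove l):ℕ)+(a:ℕ))) • pairArgR (iFunR n π ⇑f) x (a.succAbove l) a else 0))
        = -(((-1:ℤ)^(a:ℕ)) • ((f (Function.update y l (c l)) : n) : g)) := by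
      intro l
      rcases lt_or_ge ((l:ℕ)) ((a:ℕ)) with hl | hl
      · have hval : ((a.succAbove l : Fin (m+2)) : ℕ) = (l:ℕ) := by
          rw [succAbove_val', if_pos hl]
        have hif1 : ¬ a < a.succAbove l := by rw [Fin.lt_def, hval]; omega
        have hif2 : a.succAbove l < a := by rw [Fin.lt_def, hval]; exact hl
        rw [if_neg hif1, if_pos hif2, zero_add]
        have hij : ((a.succAbove l : Fin (m+2)) : ℕ) < (a:ℕ) := by rw [hval]; exact hl
        rw [pairArgR_succ (iFunR n π ⇑f) x (a.succAbove l) a hij]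
        have hmk : (⟨((a.succAbove l : Fin (m+2)):ℕ), by have := a.isLt; omega⟩ : Fin (m+1)) = l :=
          Fin.ext (by rw [hval])
        rw [hmk, iFunR_apply]
        have harg : (fun s => π ((Fin.cons ⁅x (a.succAbove l), x a⁆
              (fun t => x (a.succAbove (l.succAbove t))) : Fin (m+1) → g) s))
            = Fin.cons (-(c l)) (y ∘ l.succAbove) := by
          funext s
          induction s using Fin.cases with
          | zero =>
            show π ⁅x (a.succAbove l), x a⁆ = -(c l)
            have h1 : ⁅x (a.succAbove l), x a⁆ = -((c l : n) : g) := by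
              have h2 : x (a.succAbove l) = ((y l : n) : g) := rfl
              rw [h2, ← lie_skew]
            calc π ⁅x (a.succAbove l), x a⁆ = π (-((c l : n) : g)) := by rw [h1]
              _ = -(π ((c l : n) : g)) := map_neg π _
              _ = -(c l) := by rw [hπn]
          | succ t =>
            show π (x (a.succAbove (l.succAbove t))) = y (l.succAbove t)
            exact hπn (y (l.succAbove t))
        rw [harg]
        have hneg : f (Fin.cons (-(c l)) (y ∘ l.succAbove))
            = - f (Fin.cons (c l) (y ∘ l.succAbove)) := by
          have heq : ∀ z : n, f (Fin.cons z (y ∘ l.succAbove))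
              = f (Function.update (Fin.cons (c l) (y ∘ l.succAbove) : Fin (m+1) → n) 0 z) :=
            fun z => by rw [Fin.update_cons_zero]
          rw [heq (-(c l)), show (-(c l)) = (-1:𝕂) • (c l) from (neg_one_smul 𝕂 (c l)).symm,
            AlternatingMap.map_update_smul, Fin.update_cons_zero, neg_one_smul]
        rw [hneg, hkey l, hval]
        have hcoe : ((- f (Fin.cons (c l) (y ∘ l.succAbove)) : n) : g)
            = -((f (Fin.cons (c l) (y ∘ l.succAbove)) : n) : g) := rfl
        rw [hcoe, smul_neg, smul_smul, ← pow_add, Nat.add_comm (l:ℕ) (a:ℕ)]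
      · have hval : ((a.succAbove l : Fin (m+2)) : ℕ) = (l:ℕ)+1 := by
          rw [succAbove_val', if_neg (by omega)]
        have hif1 : a < a.succAbove l := by rw [Fin.lt_def, hval]; omega
        have hif2 : ¬ a.succAbove l < a := by rw [Fin.lt_def, hval]; omega
        rw [if_pos hif1, if_neg hif2, add_zero]
        have hij : (a:ℕ) < ((a.succAbove l : Fin (m+2)) : ℕ) := by rw [hval]; omega
        rw [pairArgR_succ (iFunR n π ⇑f) x a (a.succAbove l) hij]
        have hidx : ∀ t : Fin m,
            (a.succAbove l).succAbove
                ((⟨(a:ℕ), by have := (a.succAbove l).isLt; omega⟩ : Fin (m+1)).succAbove t)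
              = a.succAbove (l.succAbove t) := by
          intro t
          apply Fin.ext
          simp only [succAbove_val', hval]
          split_ifs <;> omega
        rw [iFunR_apply]
        have harg : (fun s => π ((Fin.cons ⁅x a, x (a.succAbove l)⁆
              (fun t => x ((a.succAbove l).succAbove
                ((⟨(a:ℕ), by have := (a.succAbove l).isLt; omega⟩ : Fin (m+1)).succAbove t))) : Fin (m+1) → g) s))
            = Fin.cons (c l) (y ∘ l.succAbove) := by
          funext s
          induction s using Fin.cases with
          | zero =>
            show π ⁅x a, x (a.succAbove l)⁆ = c l
            exact hπn (c l)
          | succ t =>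
            show π (x ((a.succAbove l).succAbove
                ((⟨(a:ℕ), by have := (a.succAbove l).isLt; omega⟩ : Fin (m+1)).succAbove t)))
              = y (l.succAbove t)
            rw [hidx t]
            exact hπn (y (l.succAbove t))
        rw [harg, hkey l, hval]
        rw [smul_smul, ← pow_add]
        rw [show (a:ℕ) + ((l:ℕ)+1) = ((a:ℕ)+(l:ℕ))+1 from rfl, pow_succ, mul_neg_one, neg_smul]
    simp only [ceD]
    rw [hA, hBsplit, Fin.sum_univ_succAbove _ a]
    rw [if_neg (lt_irrefl a), add_zero, zero_add]
    rw [Finset.sum_congr rfl (fun l _ => hG l)]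
    rw [hinv, Finset.smul_sum, ← Finset.sum_add_distrib]
    rw [Finset.sum_eq_zero]
    intro l _
    exact add_neg_cancel _
end Lie4
end St6

namespace St6
section Main
variable {𝕂 g : Type*} [Field 𝕂] [LieRing g] [LieAlgebra 𝕂 g]
variable (R n : LieSubalgebra 𝕂 g)

lemma forward (hid : ∀ x : g, ∀ y ∈ n, ⁅x, y⁆ ∈ n)
    (hcompl : IsCompl R.toSubmodule n.toSubmodule)
    (π : g →ₗ[𝕂] n) (hπn : ∀ y : n, π (y : g) = y) (hπR : ∀ r ∈ R, π r = 0)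
    {k : ℕ} (f : AlternatingMap 𝕂 n n (Fin k)) (hf : RInvt R n hid f)
    (hcoc : ∀ x : Fin (k+1) → n, ceD ⇑f x = 0) :
    ∀ x : Fin (k+1) → g, ceD (iFunR n π ⇑f) x = 0 := by
  have hdec : ∀ z : g, ∃ r ∈ R.toSubmodule, ∃ v ∈ n.toSubmodule, z = r + v := by
    intro z
    have hz : z ∈ R.toSubmodule ⊔ n.toSubmodule := by
      rw [hcompl.sup_eq_top]; trivial
    rw [Submodule.mem_sup] at hz
    obtain ⟨r, hr, v, hv, h⟩ := hz
    exact ⟨r, hr, v, hv, h.symm⟩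
  have key : ∀ s : Finset (Fin (k+1)), ∀ x : Fin (k+1) → g,
      (∀ i, i ∉ s → x i ∈ R ∨ x i ∈ n) → ceD (iFunR n π ⇑f) x = 0 := by
    intro s
    induction s using Finset.induction_on with
    | empty =>
      intro x hx
      by_cases hall : ∀ i, x i ∈ n
      · have h := ceD_iFunR_coe n π hπn f (fun i => (⟨x i, hall i⟩ : n))
        refine Eq.trans ?_ (h.trans ?_)
        · rfl
        · rw [hcoc]; exact ZeroMemClass.coe_zero _
      · push_neg at hall
        obtain ⟨a, hna⟩ := hall
        have hra : x a ∈ R := (hx a (Finset.notMem_empty a)).resolve_right hna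
        by_cases hone : ∀ p, p ≠ a → x p ∈ n
        · exact ceD_iFunR_oneR R n hid π hπn hπR f hf x a hra hone
        · push_neg at hone
          obtain ⟨b, hba, hnb⟩ := hone
          exact ceD_iFunR_twoR R n π hπR f x a b (Ne.symm hba) hra
            ((hx b (Finset.notMem_empty b)).resolve_right hnb)
    | insert _ _ hp IH =>
      rename_i p s
      intro x hx
      obtain ⟨r, hr, v, hv, hz⟩ := hdec (x p)
      have h1 : ceD (iFunR n π ⇑f) (Function.update x p r) = 0 := by
        refine IH _ (fun i hi => ?_)
        by_cases hip : i = p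
        · subst hip; rw [Function.update_self]; exact Or.inl hr
        · rw [Function.update_of_ne hip]
          exact hx i (by simp [Finset.mem_insert, hip, hi])
      have h2 : ceD (iFunR n π ⇑f) (Function.update x p v) = 0 := by
        refine IH _ (fun i hi => ?_)
        by_cases hip : i = p
        · subst hip; rw [Function.update_self]; exact Or.inr hv
        · rw [Function.update_of_ne hip]
          exact hx i (by simp [Finset.mem_insert, hip, hi])
      have hxx : x = Function.update x p (r + v) := by
        rw [← hz, Function.update_eq_self]
      rw [hxx, ceD_update_add (iFunR n π ⇑f) (iFunR_hF n π f) x p r v, h1, h2, add_zero]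
  intro x
  exact key Finset.univ x (fun i hi => absurd (Finset.mem_univ i) hi)

lemma backward (π : g →ₗ[𝕂] n) (hπn : ∀ y : n, π (y : g) = y)
    {k : ℕ} (f : AlternatingMap 𝕂 n n (Fin k))
    (hcoc : ∀ x : Fin (k+1) → g, ceD (iFunR n π ⇑f) x = 0) :
    ∀ x : Fin (k+1) → n, ceD ⇑f x = 0 := by
  intro x
  have h := ceD_iFunR_coe n π hπn f x
  have h2 : ((ceD ⇑f x : n) : g) = 0 := by rw [← h]; exact hcoc _
  exact Subtype.ext h2

end Main
end St6


/-- For `g = R ⋉ n`, an `R`-invariant cochain `f ∈ C(n,n)^R` is a cocycle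
(for the Chevalley–Eilenberg differential of `n`) if and only if `i(f)` is a cocycle for `g`;
consequently `Z(g,g) ∩ i(C(n,n)^R) = i(Z(n,n)^R)`. -/
theorem iMap_cocycle_iff_and_trace
    {𝕂 g : Type*} [Field 𝕂] [CharZero 𝕂] [LieRing g] [LieAlgebra 𝕂 g]
    (R n : LieSubalgebra 𝕂 g)
    (hid : ∀ x : g, ∀ y ∈ n, ⁅x, y⁆ ∈ n)
    (hcompl : IsCompl R.toSubmodule n.toSubmodule)
    (π : g →ₗ[𝕂] n)
    (hπn : ∀ y : n, π (y : g) = y)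
    (hπR : ∀ r ∈ R, π r = 0)
    (k : ℕ) :
    (∀ f : AlternatingMap 𝕂 n n (Fin k), RInvt R n hid f →
        ((∀ x : Fin (k + 1) → n, ceD ⇑f x = 0) ↔
          ∀ x : Fin (k + 1) → g, ceD (iFunR n π ⇑f) x = 0)) ∧
    ({F : (Fin k → g) → g | ∀ x, ceD F x = 0} ∩
        ((fun f : AlternatingMap 𝕂 n n (Fin k) => iFunR n π ⇑f) ''
          {f | RInvt R n hid f}) =
      (fun f : AlternatingMap 𝕂 n n (Fin k) => iFunR n π ⇑f) ''
        {f | RInvt R n hid f ∧ ∀ x, ceD ⇑f x = 0}) := by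
  have main : ∀ f : AlternatingMap 𝕂 n n (Fin k), RInvt R n hid f →
      ((∀ x : Fin (k + 1) → n, ceD ⇑f x = 0) ↔
        ∀ x : Fin (k + 1) → g, ceD (iFunR n π ⇑f) x = 0) := by
    intro f hf
    constructor
    · exact fun hcoc => St6.forward R n hid hcompl π hπn hπR f hf hcoc
    · exact fun hcoc => St6.backward n π hπn f hcoc
  refine ⟨main, ?_⟩
  ext F
  simp only [Set.mem_inter_iff, Set.mem_image, Set.mem_setOf_eq]
  constructor
  · rintro ⟨hZ, f, hfI, rfl⟩
    exact ⟨f, ⟨hfI, (main f hfI).mpr hZ⟩, rfl⟩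
  · rintro ⟨f, ⟨hfI, hfc⟩, rfl⟩
    exact ⟨(main f hfI).mp hfc, f, hfI, rfl⟩
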